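/- Let H be a completely metrizable topological group, G a group with |G| < 2^{ℵ₀}, and φ : H → G a group homomorphism. Then there exists an open neighborhood V of 1_H such that for every neighborhood V' of 1_H with V' ⊆ V, φ(V') = φ(V). -/

import Mathlib

open Set Filter Metric Topology Pointwise

universe u v

theorem aux_main {H : Type u} [Group H] [MetricSpace H] [IsTopologicalGroup H] [CompleteSpace H]
    {G : Type v} [Group G] (hcard : Cardinal.mk G < 2 ^ Cardinal.aleph0)
    (φ : H →* G) :
    ∃ V : Set H, IsOpen V ∧ (1 : H) ∈ V ∧
      ∀ V' ∈ nhds (1 : H), V' ⊆ V → φ '' V' = φ '' V := by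
  classical
  by_contra hcon
  push_neg at hcon
  -- helper: pow 6 as explicit product
  have pow6eq : ∀ W : Set H, W ^ (6:ℕ) = W*W*W*W*W*W := fun W => by
    rw [pow_succ, pow_succ, pow_succ, pow_succ, pow_succ, pow_one]
  have mem_pow6 : ∀ (W : Set H) (a b c d e g : H), a ∈ W → b ∈ W → c ∈ W → d ∈ W → e ∈ W →
      g ∈ W → ((((a*b)*c)*d)*e)*g ∈ W ^ (6:ℕ) := by
    intro W a b c d e g ha hb hc hd he hg
    rw [pow6eq]
    exact Set.mul_mem_mul (Set.mul_mem_mul (Set.mul_mem_mul (Set.mul_mem_mul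
      (Set.mul_mem_mul ha hb) hc) hd) he) hg
  have mul_sub_pow6 : ∀ W : Set H, (1:H) ∈ W → W * W ⊆ W ^ (6:ℕ) := by
    intro W h1 x hx
    obtain ⟨a, ha, b, hb, rfl⟩ := hx
    have := mem_pow6 W 1 1 1 1 a b h1 h1 h1 h1 ha hb
    simpa using this
  -- the key consequence of the negation
  have key : ∀ U ∈ 𝓝 (1:H), ∃ h ∈ U, ∃ V' ∈ 𝓝 (1:H), V' ⊆ U ∧ φ h ∉ φ '' V' := by
    intro U hU
    obtain ⟨V', hV'n, hV'sub, hne⟩ :=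
      hcon (interior U) isOpen_interior (mem_interior_iff_mem_nhds.mpr hU)
    have hsub : φ '' V' ⊆ φ '' interior U := Set.image_mono hV'sub
    have hex : ∃ g ∈ φ '' interior U, g ∉ φ '' V' := by
      by_contra hx
      push_neg at hx
      exact hne (Set.Subset.antisymm hsub hx)
    obtain ⟨g, ⟨x, hx, rfl⟩, hg⟩ := hex
    exact ⟨x, interior_subset hx, V', hV'n, hV'sub.trans interior_subset, hg⟩
  -- shrinking to symmetric sixth-power neighborhoods
  have shrink_pow : ∀ U : Set H, U ∈ 𝓝 (1:H) → ∃ W ∈ 𝓝 (1:H), W = W⁻¹ ∧ W ^ (6:ℕ) ⊆ U := by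
    intro U hU
    obtain ⟨V1, hV1o, hV1m, hV1⟩ := exists_open_nhds_one_mul_subset hU
    obtain ⟨V2, hV2o, hV2m, hV2⟩ := exists_open_nhds_one_mul_subset (hV1o.mem_nhds hV1m)
    obtain ⟨V3, hV3o, hV3m, hV3⟩ := exists_open_nhds_one_mul_subset (hV2o.mem_nhds hV2m)
    refine ⟨V3 ∩ V3⁻¹, Filter.inter_mem (hV3o.mem_nhds hV3m)
      (inv_mem_nhds_one H (hV3o.mem_nhds hV3m)), ?_, ?_⟩
    · rw [Set.inter_inv, inv_inv, Set.inter_comm]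
    · have hWsub : V3 ∩ V3⁻¹ ⊆ V3 := Set.inter_subset_left
      have hW2 : (V3 ∩ V3⁻¹) * (V3 ∩ V3⁻¹) ⊆ V2 := (Set.mul_subset_mul hWsub hWsub).trans hV3
      have hW4 : (V3 ∩ V3⁻¹) * (V3 ∩ V3⁻¹) * ((V3 ∩ V3⁻¹) * (V3 ∩ V3⁻¹)) ⊆ V1 :=
        (Set.mul_subset_mul hW2 hW2).trans hV2
      have h2subV1 : V2 ⊆ V1 := by
        intro x hx
        have := hV2 (Set.mul_mem_mul hx hV2m)
        rwa [mul_one] at this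
      have h6 : (V3 ∩ V3⁻¹) ^ (6:ℕ) =
          ((V3 ∩ V3⁻¹) * (V3 ∩ V3⁻¹) * ((V3 ∩ V3⁻¹) * (V3 ∩ V3⁻¹))) *
            ((V3 ∩ V3⁻¹) * (V3 ∩ V3⁻¹)) := by
        rw [pow6eq]
        simp only [mul_assoc]
      rw [h6]
      exact (Set.mul_subset_mul hW4 (hW2.trans h2subV1)).trans hV1
  -- finitely many translate smallness conditions
  have ballcond : ∀ (L : List H) (n : ℕ), ∃ S ∈ 𝓝 (1:H),
      ∀ p ∈ L, ∀ x ∈ S, dist (p*x) p < ((1:ℝ)/2)^n := by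
    intro L n
    refine ⟨⋂ p ∈ L.toFinset, {x : H | dist (p*x) p < ((1:ℝ)/2)^n}, ?_, ?_⟩
    · refine (Filter.biInter_finset_mem _).mpr fun p hp => ?_
      have hco : Continuous fun x : H => dist (p*x) p :=
        (continuous_const.mul continuous_id).dist continuous_const
      have ho : IsOpen {x : H | dist (p*x) p < ((1:ℝ)/2)^n} := isOpen_lt hco continuous_const
      refine ho.mem_nhds ?_
      show dist (p*1) p < ((1:ℝ)/2)^n
      rw [mul_one, dist_self]
      positivity
    · intro p hp x hx
      exact Set.mem_iInter₂.mp hx p (List.mem_toFinset.mpr hp)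
  -- the one-step construction
  have step : ∀ (U : Set H), U ∈ 𝓝 (1:H) → ∀ L : List H, ∃ (hh : H) (W : Set H),
      hh ∈ U ∧ W ∈ 𝓝 (1:H) ∧ W = W⁻¹ ∧ W ^ (6:ℕ) ⊆ U ∧ φ hh ∉ φ '' (W ^ (6:ℕ)) ∧
      ∀ p ∈ ((L ++ [hh]).sublists.map List.prod), ∀ x ∈ W * W,
        dist (p * x) p < ((1:ℝ)/2) ^ L.length := by
    intro U hU L
    obtain ⟨hh, hhU, V', hV'n, hV'sub, hnot⟩ := key U hU
    obtain ⟨S, hSn, hS⟩ := ballcond ((L ++ [hh]).sublists.map List.prod) L.length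
    obtain ⟨W, hWn, hWsym, hWpow⟩ := shrink_pow (V' ∩ S) (Filter.inter_mem hV'n hSn)
    have hWW : W * W ⊆ S :=
      (mul_sub_pow6 W (mem_of_mem_nhds hWn)).trans (hWpow.trans Set.inter_subset_right)
    refine ⟨hh, W, hhU, hWn, hWsym, ?_, ?_, ?_⟩
    · exact hWpow.trans (Set.inter_subset_left.trans hV'sub)
    · intro hmem
      exact hnot (Set.image_mono (hWpow.trans Set.inter_subset_left) hmem)
    · intro p hp x hx
      exact hS p hp x (hWW hx)
  -- recursive construction of the sequence of neighborhoods and elements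
  have stepT : ∀ s : {p : Set H × List H // p.1 ∈ 𝓝 (1:H)},
      ∃ t : {p : Set H × List H // p.1 ∈ 𝓝 (1:H)}, ∃ hh : H,
        hh ∈ s.1.1 ∧ t.1.2 = s.1.2 ++ [hh] ∧ t.1.1 = (t.1.1)⁻¹ ∧ t.1.1 ^ (6:ℕ) ⊆ s.1.1 ∧
        φ hh ∉ φ '' (t.1.1 ^ (6:ℕ)) ∧
        ∀ p ∈ ((s.1.2 ++ [hh]).sublists.map List.prod), ∀ x ∈ t.1.1 * t.1.1,
          dist (p * x) p < ((1:ℝ)/2) ^ s.1.2.length := by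
    intro s
    obtain ⟨hh, W, h1, h2, h3, h4, h5, h6⟩ := step s.1.1 s.2 s.1.2
    exact ⟨⟨(W, s.1.2 ++ [hh]), h2⟩, hh, h1, rfl, h3, h4, h5, h6⟩
  let f : ℕ → {p : Set H × List H // p.1 ∈ 𝓝 (1:H)} :=
    fun n => Nat.rec (motive := fun _ => {p : Set H × List H // p.1 ∈ 𝓝 (1:H)})
      ⟨(Set.univ, []), Filter.univ_mem⟩ (fun _ s => (stepT s).choose) n
  let U : ℕ → Set H := fun n => (f n).1.1
  let LL : ℕ → List H := fun n => (f n).1.2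
  have hf : ∀ n, ∃ hh : H,
      hh ∈ U n ∧ LL (n+1) = LL n ++ [hh] ∧ U (n+1) = (U (n+1))⁻¹ ∧ U (n+1) ^ (6:ℕ) ⊆ U n ∧
      φ hh ∉ φ '' (U (n+1) ^ (6:ℕ)) ∧
      ∀ p ∈ ((LL n ++ [hh]).sublists.map List.prod), ∀ x ∈ U (n+1) * U (n+1),
        dist (p * x) p < ((1:ℝ)/2) ^ (LL n).length :=
    fun n => (stepT (f n)).choose_spec
  let hh : ℕ → H := fun n => (hf n).choose
  have hspec : ∀ n,
      hh n ∈ U n ∧ LL (n+1) = LL n ++ [hh n] ∧ U (n+1) = (U (n+1))⁻¹ ∧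
      U (n+1) ^ (6:ℕ) ⊆ U n ∧ φ (hh n) ∉ φ '' (U (n+1) ^ (6:ℕ)) ∧
      ∀ p ∈ ((LL n ++ [hh n]).sublists.map List.prod), ∀ x ∈ U (n+1) * U (n+1),
        dist (p * x) p < ((1:ℝ)/2) ^ (LL n).length :=
    fun n => (hf n).choose_spec
  have hUn : ∀ n, U n ∈ 𝓝 (1:H) := fun n => (f n).2
  have h1U : ∀ n, (1:H) ∈ U n := fun n => mem_of_mem_nhds (hUn n)
  have hUsub : ∀ m, U (m+1) * U (m+1) ⊆ U m := by
    intro m x hx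
    obtain ⟨a, ha, b, hb, rfl⟩ := hx
    apply (hspec m).2.2.2.1
    have h6 := mem_pow6 (U (m+1)) 1 1 1 1 a b (h1U (m+1)) (h1U (m+1)) (h1U (m+1)) (h1U (m+1)) ha hb
    simpa using h6
  have hlen : ∀ n, (LL n).length = n := by
    intro n
    induction n with
    | zero => rfl
    | succ n ih => rw [(hspec n).2.1, List.length_append, ih]; rfl
  have hLval : ∀ n, LL n = (List.range n).map hh := by
    intro n
    induction n with
    | zero => rfl
    | succ n ih => rw [(hspec n).2.1, ih, List.range_succ, List.map_append]; rfl
  -- partial products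
  let q : (ℕ → Bool) → ℕ → H := fun ε m => (((List.range m).filter ε).map hh).prod
  have hqsucc : ∀ (ε : ℕ → Bool) (m : ℕ),
      q ε (m+1) = q ε m * (if ε m then hh m else 1) := by
    intro ε m
    show (((List.range (m+1)).filter ε).map hh).prod = _
    rw [List.range_succ, List.filter_append, List.map_append, List.prod_append]
    cases hem : ε m <;> simp [hem] <;> rfl
  have hqmem : ∀ (ε : ℕ → Bool) (m : ℕ), q ε m ∈ (LL m).sublists.map List.prod := by
    intro ε m
    rw [hLval m]
    exact List.mem_map.mpr ⟨((List.range m).filter ε).map hh,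
      List.mem_sublists.mpr (List.Sublist.map hh List.filter_sublist), rfl⟩
  have tail : ∀ (ε : ℕ → Bool) (n : ℕ), ∀ m : ℕ,
      ∃ a ∈ U m, ∃ b ∈ U m, q ε (m + n) = q ε m * (a * b) := by
    intro ε n
    induction n with
    | zero =>
      intro m
      exact ⟨1, h1U m, 1, h1U m, by simp⟩
    | succ n ih =>
      intro m
      obtain ⟨a, ha, b, hb, heq⟩ := ih (m+1)
      refine ⟨(if ε m then hh m else 1), ?_, a * b, hUsub m (Set.mul_mem_mul ha hb), ?_⟩
      · cases hem : ε m <;> simp [hem]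
        exacts [h1U m, (hspec m).1]
      · have h1 : m + (n+1) = (m+1) + n := by omega
        rw [h1, heq, hqsucc ε m, mul_assoc]
  -- Cauchy sequences and limits
  have hcauchy : ∀ ε : ℕ → Bool, CauchySeq (q ε) := by
    intro ε
    rw [Metric.cauchySeq_iff']
    intro δ hδ
    obtain ⟨N, hN⟩ := exists_pow_lt_of_lt_one hδ (by norm_num : (1:ℝ)/2 < 1)
    refine ⟨N + 1, fun n hn => ?_⟩
    obtain ⟨a, ha, b, hb, heq⟩ := tail ε (n - (N+1)) (N+1)
    rw [show (N+1) + (n - (N+1)) = n from by omega] at heq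
    have hmem : q ε (N+1) ∈ ((LL N ++ [hh N]).sublists.map List.prod) := by
      rw [← (hspec N).2.1]
      exact hqmem ε (N+1)
    have hd := (hspec N).2.2.2.2.2 (q ε (N+1)) hmem (a*b) (Set.mul_mem_mul ha hb)
    rw [heq]
    calc dist (q ε (N+1) * (a*b)) (q ε (N+1)) < ((1:ℝ)/2) ^ (LL N).length := hd
      _ = ((1:ℝ)/2) ^ N := by rw [hlen N]
      _ < δ := hN
  have hlim : ∀ ε : ℕ → Bool, ∃ x : H, Tendsto (q ε) atTop (𝓝 x) :=
    fun ε => cauchySeq_tendsto_of_complete (hcauchy ε)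
  let xe : (ℕ → Bool) → H := fun ε => (hlim ε).choose
  have hxe : ∀ ε, Tendsto (q ε) atTop (𝓝 (xe ε)) := fun ε => (hlim ε).choose_spec
  -- limits sit inside translated triple products
  have closU : ∀ (S : Set H) (m : ℕ) (x : H), x ∈ closure S → x ∈ S * U (m+1) := by
    intro S m x hx
    have h1 : (fun u => x * u) '' U (m+1) ∈ 𝓝 x := by
      have := (Homeomorph.mulLeft x).isOpenMap.image_mem_nhds (hUn (m+1))
      simpa using this
    rw [mem_closure_iff_nhds] at hx
    obtain ⟨y, hy1, hy2⟩ := hx _ h1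
    obtain ⟨u, hu, rfl⟩ := hy1
    refine ⟨x * u, hy2, u⁻¹, ?_, by group⟩
    rw [(hspec m).2.2.1]
    exact Set.inv_mem_inv.mpr hu
  have xmem : ∀ (ε : ℕ → Bool) (n : ℕ),
      ∃ c ∈ U (n+1) * U (n+1) * U (n+1), xe ε = q ε (n+1) * c := by
    intro ε n
    have hcl : xe ε ∈ closure (q ε (n+1) • (U (n+1) * U (n+1))) := by
      refine mem_closure_of_tendsto (hxe ε) ?_
      filter_upwards [eventually_ge_atTop (n+1)] with m hm
      obtain ⟨a, ha, b, hb, heq⟩ := tail ε (m - (n+1)) (n+1)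
      rw [show (n+1) + (m - (n+1)) = m from by omega] at heq
      exact ⟨a * b, Set.mul_mem_mul ha hb, heq.symm⟩
    rw [closure_smul] at hcl
    obtain ⟨c, hc, hceq⟩ := hcl
    exact ⟨c, closU _ n c hc, hceq.symm⟩
  -- distinctness of images
  have inj2 : ∀ (ε ε' : ℕ → Bool) (n : ℕ), (∀ k, k < n → ε k = ε' k) → ε n = true →
      ε' n = false → φ (xe ε) ≠ φ (xe ε') := by
    intro ε ε' n hag hen hen' hcon2
    have hqq : q ε n = q ε' n := by
      show (((List.range n).filter ε).map hh).prod = (((List.range n).filter ε').map hh).prod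
      rw [List.filter_congr (fun k hk => hag k (List.mem_range.mp hk))]
    have e1 : q ε (n+1) = q ε n * hh n := by rw [hqsucc]; simp [hen]
    have e2 : q ε' (n+1) = q ε n := by rw [hqsucc, hqq]; simp [hen']
    obtain ⟨c, hc, hxc⟩ := xmem ε n
    obtain ⟨c', hc', hxc'⟩ := xmem ε' n
    obtain ⟨ab, hab, c1, hc1, rfl⟩ := hc
    obtain ⟨a1, ha1, b1, hb1, rfl⟩ := hab
    obtain ⟨ab', hab', c1', hc1', rfl⟩ := hc'
    obtain ⟨a1', ha1', b1', hb1', rfl⟩ := hab'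
    apply (hspec n).2.2.2.2.1
    have hinv : ∀ u : H, u ∈ U (n+1) → u⁻¹ ∈ U (n+1) := by
      intro u hu
      rw [(hspec n).2.2.1]
      exact Set.inv_mem_inv.mpr hu
    refine ⟨(a1' * b1' * c1') * (a1 * b1 * c1)⁻¹, ?_, ?_⟩
    · have hmm := mem_pow6 (U (n+1)) a1' b1' c1' c1⁻¹ b1⁻¹ a1⁻¹ ha1' hb1' hc1'
        (hinv _ hc1) (hinv _ hb1) (hinv _ ha1)
      have heq2 : (a1' * b1' * c1') * (a1 * b1 * c1)⁻¹ =
          ((((a1' * b1') * c1') * c1⁻¹) * b1⁻¹) * a1⁻¹ := by group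
      rw [heq2]
      exact hmm
    · have hH1 : hh n = (q ε n)⁻¹ * xe ε * (a1 * b1 * c1)⁻¹ := by
        rw [hxc, e1]; group
      have hH2 : (a1' * b1' * c1') * (a1 * b1 * c1)⁻¹ =
          (q ε n)⁻¹ * xe ε' * (a1 * b1 * c1)⁻¹ := by
        rw [hxc', e2]; group
      rw [hH1, hH2]
      simp only [map_mul, map_inv, hcon2]
  -- build an injection from the Cantor space into G
  let F : (ULift.{v} ℕ → ULift.{v} Bool) → G := fun ε => φ (xe (fun n => (ε ⟨n⟩).down))
  have hFinj : Function.Injective F := by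
    intro ε ε' hFe
    have hσ : (fun n => (ε ⟨n⟩).down) = (fun n => (ε' ⟨n⟩).down) := by
      by_contra hne
      obtain ⟨k, hk⟩ := Function.ne_iff.mp hne
      have hex : ∃ k, (fun n => (ε ⟨n⟩).down) k ≠ (fun n => (ε' ⟨n⟩).down) k := ⟨k, hk⟩
      have hnsp := Nat.find_spec hex
      have hagree : ∀ j, j < Nat.find hex → (ε ⟨j⟩).down = (ε' ⟨j⟩).down :=
        fun j hj => not_not.mp (Nat.find_min hex hj)
      cases hb : (ε ⟨Nat.find hex⟩).down <;> cases hb' : (ε' ⟨Nat.find hex⟩).down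
      · exact hnsp (show (ε ⟨Nat.find hex⟩).down = (ε' ⟨Nat.find hex⟩).down by rw [hb, hb'])
      · exact inj2 _ _ (Nat.find hex) (fun k hk => (hagree k hk).symm) hb' hb hFe.symm
      · exact inj2 _ _ (Nat.find hex) hagree hb hb' hFe
      · exact hnsp (show (ε ⟨Nat.find hex⟩).down = (ε' ⟨Nat.find hex⟩).down by rw [hb, hb'])
    funext x
    have h := congrFun hσ x.down
    exact ULift.ext _ _ h
  have hle : Cardinal.mk (ULift.{v} ℕ → ULift.{v} Bool) ≤ Cardinal.mk G :=
    Cardinal.mk_le_of_injective hFinj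
  have heq2 : Cardinal.mk (ULift.{v} ℕ → ULift.{v} Bool) = 2 ^ Cardinal.aleph0 := by
    rw [← Cardinal.power_def]
    simp
  exact absurd hcard (not_lt.mpr (heq2 ▸ hle))

/-- If `H` is a completely metrizable topological group, `G` a group of cardinality
`< 2 ^ ℵ₀` and `φ : H →* G` a (not necessarily continuous) homomorphism, then there
is an open neighborhood `V` of `1` such that `φ '' V' = φ '' V` for every
neighborhood `V' ⊆ V` of `1`. -/
theorem exists_stable_image_nhds_of_completelyMetrizable
    {H : Type*} [Group H] [tH : TopologicalSpace H] [IsTopologicalGroup H]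
    (hH : ∃ mH : MetricSpace H,
      mH.toUniformSpace.toTopologicalSpace = tH ∧ @CompleteSpace H mH.toUniformSpace)
    {G : Type*} [Group G] (hcard : Cardinal.mk G < 2 ^ Cardinal.aleph0)
    (φ : H →* G) :
    ∃ V : Set H, IsOpen V ∧ (1 : H) ∈ V ∧
      ∀ V' ∈ nhds (1 : H), V' ⊆ V → φ '' V' = φ '' V := by
  obtain ⟨m, rfl, hc⟩ := hH
  letI : MetricSpace H := m
  haveI : CompleteSpace H := hc
  exact aux_main hcard φ
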